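/- For 4 ≤ r ≤ 8, every ruling D in ℤ^{r+1} admits exactly r - 1 distinct unordered decompositions D = E + F into pairs of exceptional classes with (E,F) = 1. -/

import Mathlib

/-- The Del Pezzo intersection form on `ℤ^{r+1}`: `(l_0,l_0)=1`, `(l_i,l_i)=-1` for `i ≥ 1`,
`(l_i,l_j)=0` for `i ≠ j`. -/
def dpB {r : ℕ} (x y : Fin (r + 1) → ℤ) : ℤ :=
  x 0 * y 0 - ∑ i : Fin r, x i.succ * y i.succ

/-- The anticanonical class `-K = 3 l_0 - l_1 - ⋯ - l_r`. -/
def negK {r : ℕ} : Fin (r + 1) → ℤ := fun i => if i = 0 then 3 else -1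

/-- The standard basis vector `l_i`. -/
def l {r : ℕ} (i : Fin (r + 1)) : Fin (r + 1) → ℤ := fun j => if j = i then 1 else 0

/-- An exceptional class: `(E,E) = -1` and `(E,-K) = 1`. -/
def IsExc {r : ℕ} (E : Fin (r + 1) → ℤ) : Prop := dpB E E = -1 ∧ dpB E negK = 1

/-- A root: `(α,α) = -2` and `(α,-K) = 0`. -/
def IsRoot {r : ℕ} (a : Fin (r + 1) → ℤ) : Prop := dpB a a = -2 ∧ dpB a negK = 0

/-- A ruling: `(D,D) = 0` and `(D,-K) = 2`. -/
def IsRuling {r : ℕ} (D : Fin (r + 1) → ℤ) : Prop := dpB D D = 0 ∧ dpB D negK = 2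

/-- The reflection `σ_α(x) = x + (x,α) α`. -/
def reflct {r : ℕ} (a x : Fin (r + 1) → ℤ) : Fin (r + 1) → ℤ :=
  fun i => x i + dpB x a * a i


variable {r : ℕ}

lemma dpB_comm (x y : Fin (r+1) → ℤ) : dpB x y = dpB y x := by
  simp [dpB, mul_comm]

lemma dpB_add_left (x y z : Fin (r+1) → ℤ) : dpB (x + y) z = dpB x z + dpB y z := by
  simp only [dpB, Pi.add_apply, add_mul]
  rw [Finset.sum_add_distrib]; ring

lemma dpB_add_right (x y z : Fin (r+1) → ℤ) : dpB x (y + z) = dpB x y + dpB x z := by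
  rw [dpB_comm, dpB_add_left, dpB_comm y x, dpB_comm z x]

lemma dpB_sub_left (x y z : Fin (r+1) → ℤ) : dpB (x - y) z = dpB x z - dpB y z := by
  simp only [dpB, Pi.sub_apply, sub_mul]
  rw [Finset.sum_sub_distrib]; ring

lemma dpB_sub_right (x y z : Fin (r+1) → ℤ) : dpB x (y - z) = dpB x y - dpB x z := by
  rw [dpB_comm, dpB_sub_left, dpB_comm y x, dpB_comm z x]

lemma dpB_mul_left (c : ℤ) (x y : Fin (r+1) → ℤ) :
    dpB (fun i => c * x i) y = c * dpB x y := by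
  simp only [dpB, mul_sub, Finset.mul_sum]
  congr 1
  · ring
  · exact Finset.sum_congr rfl (fun i _ => by ring)

lemma dpB_negK_eq (x : Fin (r+1) → ℤ) : dpB x negK = 3 * x 0 + ∑ i : Fin r, x i.succ := by
  simp only [dpB, negK]
  simp only [if_true, eq_self_iff_true]
  have : ∀ i : Fin r, x i.succ * (if i.succ = (0 : Fin (r+1)) then (3:ℤ) else -1) = - x i.succ := by
    intro i
    rw [if_neg (Fin.succ_ne_zero i)]; ring
  rw [Finset.sum_congr rfl (fun i _ => this i), Finset.sum_neg_distrib]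
  ring

lemma reflct_eq (a x : Fin (r+1) → ℤ) : reflct a x = x + fun i => dpB x a * a i := rfl

lemma dpB_reflct_right (a x y : Fin (r+1) → ℤ) :
    dpB x (reflct a y) = dpB x y + dpB y a * dpB x a := by
  rw [reflct_eq, dpB_add_right]
  congr 1
  rw [dpB_comm x, dpB_mul_left, dpB_comm a x]

lemma dpB_reflct_left (a x y : Fin (r+1) → ℤ) :
    dpB (reflct a x) y = dpB x y + dpB x a * dpB a y := by
  rw [dpB_comm, dpB_reflct_right, dpB_comm y x, dpB_comm y a]

lemma dpB_reflct_reflct {a : Fin (r+1) → ℤ} (ha : dpB a a = -2) (x y : Fin (r+1) → ℤ) :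
    dpB (reflct a x) (reflct a y) = dpB x y := by
  rw [dpB_reflct_left, dpB_reflct_right, dpB_reflct_right, ha, dpB_comm a y]
  ring

lemma reflct_reflct {a : Fin (r+1) → ℤ} (ha : dpB a a = -2) (x : Fin (r+1) → ℤ) :
    reflct a (reflct a x) = x := by
  funext i
  show reflct a x i + dpB (reflct a x) a * a i = x i
  rw [dpB_reflct_left, ha]
  show x i + dpB x a * a i + _ = x i
  ring

lemma reflct_negK {a : Fin (r+1) → ℤ} (ha : dpB a negK = 0) :
    reflct a negK = negK := by
  funext i
  show negK i + dpB negK a * a i = negK i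
  rw [dpB_comm, ha]; ring

lemma reflct_add (a x y : Fin (r+1) → ℤ) :
    reflct a (x + y) = reflct a x + reflct a y := by
  funext i
  show (x + y) i + dpB (x + y) a * a i = _
  rw [dpB_add_left]
  show x i + y i + _ = (x i + dpB x a * a i) + (y i + dpB y a * a i)
  ring

lemma reflct_inj {a : Fin (r+1) → ℤ} (ha : dpB a a = -2) :
    Function.Injective (reflct (r := r) a) :=
  Function.LeftInverse.injective (g := reflct a) (reflct_reflct ha)

lemma IsExc_reflct {a E : Fin (r+1) → ℤ} (ha : IsRoot a) (hE : IsExc E) :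
    IsExc (reflct a E) := by
  obtain ⟨h1, h2⟩ := hE
  constructor
  · rw [dpB_reflct_reflct ha.1, h1]
  · have := reflct_negK (r := r) ha.2
    calc dpB (reflct a E) negK = dpB (reflct a E) (reflct a negK) := by rw [this]
    _ = 1 := by rw [dpB_reflct_reflct ha.1, h2]

lemma IsRuling_reflct {a D : Fin (r+1) → ℤ} (ha : IsRoot a) (hD : IsRuling D) :
    IsRuling (reflct a D) := by
  obtain ⟨h1, h2⟩ := hD
  constructor
  · rw [dpB_reflct_reflct ha.1, h1]
  · calc dpB (reflct a D) negK = dpB (reflct a D) (reflct a negK) := by rw [reflct_negK ha.2]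
    _ = 2 := by rw [dpB_reflct_reflct ha.1, h2]

def decomps {r : ℕ} (D : Fin (r + 1) → ℤ) : Set (Set (Fin (r + 1) → ℤ)) :=
  {s | ∃ E F : Fin (r + 1) → ℤ,
      IsExc E ∧ IsExc F ∧ dpB E F = 1 ∧ E + F = D ∧ s = {E, F}}

lemma decomps_reflct {a : Fin (r+1) → ℤ} (ha : IsRoot a) (D : Fin (r+1) → ℤ) :
    decomps (reflct a D) = (Set.image (reflct a)) '' (decomps D) := by
  ext s
  constructor
  · rintro ⟨E, F, hE, hF, hEF, hsum, rfl⟩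
    refine ⟨{reflct a E, reflct a F}, ⟨reflct a E, reflct a F, IsExc_reflct ha hE,
      IsExc_reflct ha hF, by rw [dpB_reflct_reflct ha.1]; exact hEF, ?_, rfl⟩, ?_⟩
    · rw [← reflct_add, hsum, reflct_reflct ha.1]
    · rw [Set.image_pair, reflct_reflct ha.1, reflct_reflct ha.1]
  · rintro ⟨t, ⟨E, F, hE, hF, hEF, hsum, rfl⟩, rfl⟩
    refine ⟨reflct a E, reflct a F, IsExc_reflct ha hE, IsExc_reflct ha hF,
      by rw [dpB_reflct_reflct ha.1]; exact hEF, by rw [← reflct_add, hsum], ?_⟩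
    rw [Set.image_pair]

lemma decomps_reflct_ncard {a : Fin (r+1) → ℤ} (ha : IsRoot a) (D : Fin (r+1) → ℤ) :
    (decomps (reflct a D)).ncard = (decomps D).ncard := by
  rw [decomps_reflct ha]
  exact Set.ncard_image_of_injective _ (Set.image_injective.mpr (reflct_inj ha.1))

lemma dpB_l_right (x : Fin (r+1) → ℤ) (i : Fin (r+1)) :
    dpB x (l i) = if i = 0 then x 0 else - x i := by
  induction i using Fin.cases with
  | zero =>
    simp [dpB, l, Fin.succ_ne_zero]
  | succ s =>
    have h0 : ((0 : Fin (r+1)) = s.succ) = False := by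
      simp [(Fin.succ_ne_zero s).symm]
    have hterm : ∀ t : Fin r, x t.succ * (if t.succ = s.succ then (1:ℤ) else 0)
        = if t = s then x t.succ else 0 := by
      intro t
      by_cases h : t = s
      · subst h; simp
      · rw [if_neg (fun hc => h (Fin.succ_inj.mp hc)), if_neg h, mul_zero]
    simp only [dpB, l, h0, if_false, mul_zero, Fin.succ_ne_zero, hterm,
      Finset.sum_ite_eq' Finset.univ s, Finset.mem_univ, if_true]
    ring

lemma dpB_l_left (x : Fin (r+1) → ℤ) (i : Fin (r+1)) :
    dpB (l i) x = if i = 0 then x 0 else - x i := by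
  rw [dpB_comm, dpB_l_right]

lemma l_apply_self (i : Fin (r+1)) : l i i = 1 := by simp [l]

lemma l_apply_ne {i t : Fin (r+1)} (h : t ≠ i) : l i t = 0 := by simp [l, h]

lemma dpB_l_l (a b : Fin (r+1)) :
    dpB (l a) (l b) = if b = 0 then l a 0 else - l a b := dpB_l_right _ _

lemma dpB_l_negK (i : Fin (r+1)) : dpB (l i) negK = if i = 0 then 3 else 1 := by
  rw [dpB_comm]
  have := dpB_l_right (negK (r := r)) i
  rw [this]
  by_cases h : i = 0
  · simp [h, negK]
  · simp [h, negK]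

lemma isExc_l (i : Fin r) : IsExc (l (r := r) i.succ) := by
  constructor
  · rw [dpB_l_right, if_neg (Fin.succ_ne_zero i), l_apply_self]
  · rw [dpB_l_negK, if_neg (Fin.succ_ne_zero i)]

section ruling
variable {D : Fin (r+1) → ℤ}

lemma ruling_sum_sq (hD : IsRuling D) :
    ∑ i : Fin r, D i.succ ^ 2 = D 0 ^ 2 := by
  have h := hD.1
  unfold dpB at h
  have : ∀ i : Fin r, D i.succ * D i.succ = D i.succ ^ 2 := fun i => (sq (D i.succ)).symm
  rw [Finset.sum_congr rfl (fun i _ => this i)] at h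
  nlinarith [h]

lemma ruling_sum (hD : IsRuling D) :
    ∑ i : Fin r, D i.succ = 2 - 3 * D 0 := by
  have h := hD.2
  rw [dpB_negK_eq] at h
  linarith

lemma ruling_d_pos (h1 : 4 ≤ r) (h2 : r ≤ 8) (hD : IsRuling D) : 1 ≤ D 0 := by
  have hq := ruling_sum_sq hD
  have hs := ruling_sum hD
  have cs := sq_sum_le_card_mul_sum_sq (s := (Finset.univ : Finset (Fin r)))
    (f := fun i => D i.succ)
  rw [hs, hq, Finset.card_univ, Fintype.card_fin] at cs
  have hr : (r : ℤ) ≤ 8 := by exact_mod_cast h2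
  by_contra h
  push_neg at h
  nlinarith [sq_nonneg (D 0), cs, hr, h]

lemma ruling_coord_nonpos (h1 : 4 ≤ r) (h2 : r ≤ 8) (hD : IsRuling D) (j : Fin r) :
    D j.succ ≤ 0 := by
  by_contra h
  push_neg at h
  have hd := ruling_d_pos h1 h2 hD
  have hq := ruling_sum_sq hD
  have hs := ruling_sum hD
  have hmem : j ∈ (Finset.univ : Finset (Fin r)) := Finset.mem_univ j
  have hq' : ∑ i ∈ Finset.univ.erase j, D i.succ ^ 2 = D 0 ^ 2 - D j.succ ^ 2 := by
    have h3 := Finset.sum_erase_add Finset.univ (fun i => D i.succ ^ 2) hmem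
    linarith [h3, hq]
  have hs' : ∑ i ∈ Finset.univ.erase j, D i.succ = 2 - 3 * D 0 - D j.succ := by
    have h3 := Finset.sum_erase_add Finset.univ (fun i => D i.succ) hmem
    linarith [h3, hs]
  have cs := sq_sum_le_card_mul_sum_sq (s := Finset.univ.erase j)
    (f := fun i => D i.succ)
  rw [hq', hs', Finset.card_erase_of_mem hmem, Finset.card_univ, Fintype.card_fin] at cs
  have hcard : ((r - 1 : ℕ) : ℤ) = (r : ℤ) - 1 := by
    have : 1 ≤ r := by omega
    push_cast [Nat.cast_sub this]
    ring
  rw [hcard] at cs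
  have hr : (r : ℤ) ≤ 8 := by exact_mod_cast h2
  set t := D j.succ with ht
  set d := D 0 with hdd
  have hkey : (r:ℤ) * (d^2 - t^2) - ((r:ℤ)-1) * (d^2-t^2) = d^2 - t^2 := by ring
  nlinarith [cs, sq_nonneg (2*d + 3*t - 6), mul_nonneg (by linarith : (0:ℤ) ≤ t - 1)
    (by linarith : (0:ℤ) ≤ t + 5), sq_nonneg t, sq_nonneg d,
    mul_nonneg (by linarith : (0:ℤ) ≤ 8 - (r:ℤ)) (sq_nonneg t)]
end ruling

lemma ruling_three_indices {D : Fin (r+1) → ℤ} (h1 : 4 ≤ r) (h2 : r ≤ 8)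
    (hD : IsRuling D) (hd2 : 2 ≤ D 0) :
    ∃ i j k : Fin r, i ≠ j ∧ i ≠ k ∧ j ≠ k ∧
      D 0 + 1 ≤ (- D i.succ) + (- D j.succ) + (- D k.succ) := by
  classical
  set m : Fin r → ℤ := fun i => - D i.succ with hm
  have hmnn : ∀ i, 0 ≤ m i := fun i => by
    simp only [hm]; linarith [ruling_coord_nonpos h1 h2 hD i]
  have hq : ∑ i : Fin r, m i ^ 2 = D 0 ^ 2 := by
    rw [← ruling_sum_sq hD]; exact Finset.sum_congr rfl (fun i _ => by simp only [hm]; ring)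
  have hs : ∑ i : Fin r, m i = 3 * D 0 - 2 := by
    have := ruling_sum hD
    have h4 : ∑ i : Fin r, m i = - ∑ i : Fin r, D i.succ := by
      rw [← Finset.sum_neg_distrib]
    rw [h4, this]; ring
  -- pick the three largest
  have hne1 : (Finset.univ : Finset (Fin r)).Nonempty := by
    rw [← Finset.card_pos, Finset.card_univ, Fintype.card_fin]; omega
  obtain ⟨i, hi, hmax_i⟩ := Finset.exists_max_image Finset.univ m hne1
  have hne2 : (Finset.univ.erase i).Nonempty := by
    rw [← Finset.card_pos, Finset.card_erase_of_mem hi, Finset.card_univ, Fintype.card_fin]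
    omega
  obtain ⟨j, hj, hmax_j⟩ := Finset.exists_max_image _ m hne2
  have hne3 : ((Finset.univ.erase i).erase j).Nonempty := by
    rw [← Finset.card_pos, Finset.card_erase_of_mem hj, Finset.card_erase_of_mem hi,
      Finset.card_univ, Fintype.card_fin]
    omega
  obtain ⟨k, hk, hmax_k⟩ := Finset.exists_max_image _ m hne3
  have hij : i ≠ j := fun h => (Finset.mem_erase.mp hj).1 h.symm
  have hjk : j ≠ k := fun h => (Finset.mem_erase.mp hk).1 h.symm
  have hik : i ≠ k := fun h => (Finset.mem_erase.mp (Finset.mem_erase.mp hk).2).1 h.symm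
  refine ⟨i, j, k, hij, hik, hjk, ?_⟩
  by_contra hcon
  push_neg at hcon
  have hsum3 : m i + m j + m k ≤ D 0 := by simp only [hm] at *; linarith
  -- the rest of the indices
  set R := ((Finset.univ.erase i).erase j).erase k with hR
  have hmem_k : k ∈ (Finset.univ.erase i).erase j := hk
  have hQsplit : ∑ t ∈ R, m t ^ 2 = D 0 ^ 2 - m i ^ 2 - m j ^ 2 - m k ^ 2 := by
    have e1 := Finset.sum_erase_add ((Finset.univ.erase i).erase j) (fun t => m t ^ 2) hmem_k
    have e2 := Finset.sum_erase_add (Finset.univ.erase i) (fun t => m t ^ 2) hj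
    have e3 := Finset.sum_erase_add Finset.univ (fun t => m t ^ 2) hi
    rw [← hR] at e1
    linarith [e1, e2, e3, hq]
  have hSsplit : ∑ t ∈ R, m t = 3 * D 0 - 2 - m i - m j - m k := by
    have e1 := Finset.sum_erase_add ((Finset.univ.erase i).erase j) m hmem_k
    have e2 := Finset.sum_erase_add (Finset.univ.erase i) m hj
    have e3 := Finset.sum_erase_add Finset.univ m hi
    rw [← hR] at e1
    linarith [e1, e2, e3, hs]
  have hmkub : ∀ t ∈ R, m t ≤ m k := by
    intro t ht
    exact hmax_k t (Finset.mem_erase.mp ht).2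
  have hQR : ∑ t ∈ R, m t ^ 2 ≤ m k * ∑ t ∈ R, m t := by
    rw [Finset.mul_sum]
    refine Finset.sum_le_sum (fun t ht => ?_)
    have h5 := hmkub t ht
    have h6 := hmnn t
    nlinarith
  -- m i, m j ≤ d
  have hmi_le : m i ≤ D 0 := by
    have : m i ^ 2 ≤ D 0 ^ 2 := by
      rw [← hq]
      exact Finset.single_le_sum (fun t _ => sq_nonneg (m t)) hi
    nlinarith [hmnn i]
  have hmj_le : m j ≤ D 0 := by
    have : m j ^ 2 ≤ D 0 ^ 2 := by
      rw [← hq]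
      exact Finset.single_le_sum (fun t _ => sq_nonneg (m t)) (Finset.mem_univ j)
    nlinarith [hmnn j]
  have hmk_le_j : m k ≤ m j := hmax_j k (Finset.mem_erase.mp hk).2
  have hmj_le_i : m j ≤ m i := hmax_i j (Finset.mem_univ j)
  -- sum over R bounded by card * m k
  have hcardR : (R.card : ℤ) ≤ 5 := by
    have : R.card = r - 3 := by
      rw [hR, Finset.card_erase_of_mem hmem_k, Finset.card_erase_of_mem hj,
        Finset.card_erase_of_mem hi, Finset.card_univ, Fintype.card_fin]
      omega
    rw [this]
    have : r - 3 ≤ 5 := by omega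
    exact_mod_cast this
  have hSR_ub : ∑ t ∈ R, m t ≤ (R.card : ℤ) * m k := by
    calc ∑ t ∈ R, m t ≤ ∑ _t ∈ R, m k := Finset.sum_le_sum hmkub
    _ = (R.card : ℤ) * m k := by rw [Finset.sum_const, nsmul_eq_mul]
  have hmk_nn : 0 ≤ m k := hmnn k
  -- derive the contradiction
  nlinarith [hQsplit, hSsplit, hQR, hSR_ub, hcardR, hmk_nn, hsum3, hd2, hmi_le, hmj_le,
    hmk_le_j, hmj_le_i,
    mul_nonneg (by linarith : (0:ℤ) ≤ D 0 - m i) (by linarith : (0:ℤ) ≤ m i - m k),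
    mul_nonneg (by linarith : (0:ℤ) ≤ D 0 - m j) (by linarith : (0:ℤ) ≤ m j - m k),
    mul_nonneg hmk_nn (by linarith : (0:ℤ) ≤ D 0 - (m i + m j + m k)),
    mul_nonneg (by linarith : (0:ℤ) ≤ D 0) (by linarith : (0:ℤ) ≤ D 0 - (m i + m j + m k)),
    mul_nonneg (by linarith : (0:ℤ) ≤ (5 : ℤ) - R.card) hmk_nn]

lemma isRoot_cubic {i j k : Fin r} (hij : i ≠ j) (hik : i ≠ k) (hjk : j ≠ k) :
    IsRoot (l (r := r) 0 - l i.succ - l j.succ - l k.succ) := by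
  have hij' : i.succ ≠ j.succ := fun h => hij (Fin.succ_inj.mp h)
  have hik' : i.succ ≠ k.succ := fun h => hik (Fin.succ_inj.mp h)
  have hjk' : j.succ ≠ k.succ := fun h => hjk (Fin.succ_inj.mp h)
  constructor
  · simp only [dpB_sub_left, dpB_sub_right, dpB_l_right, dpB_l_left]
    simp [l, Fin.succ_ne_zero, (Fin.succ_ne_zero i).symm, (Fin.succ_ne_zero j).symm,
      (Fin.succ_ne_zero k).symm, hij', hik', hjk', hij'.symm, hik'.symm, hjk'.symm]
  · simp only [dpB_sub_left, dpB_l_negK]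
    simp [Fin.succ_ne_zero]

lemma descent_step {D : Fin (r+1) → ℤ} (h1 : 4 ≤ r) (h2 : r ≤ 8)
    (hD : IsRuling D) (hd2 : 2 ≤ D 0) :
    ∃ a : Fin (r+1) → ℤ, IsRoot a ∧ IsRuling (reflct a D) ∧
      1 ≤ (reflct a D) 0 ∧ (reflct a D) 0 < D 0 := by
  obtain ⟨i, j, k, hij, hik, hjk, hsum⟩ := ruling_three_indices h1 h2 hD hd2
  set a := l (r := r) 0 - l i.succ - l j.succ - l k.succ with ha
  have hroot : IsRoot a := isRoot_cubic hij hik hjk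
  have hDa : dpB D a = D 0 + D i.succ + D j.succ + D k.succ := by
    rw [ha]
    simp only [dpB_sub_right, dpB_l_right]
    simp [Fin.succ_ne_zero]
  have hDa_neg : dpB D a ≤ -1 := by rw [hDa]; linarith
  have ha0 : a 0 = 1 := by
    rw [ha]
    simp [l, (Fin.succ_ne_zero i).symm, (Fin.succ_ne_zero j).symm, (Fin.succ_ne_zero k).symm]
  have hRul' : IsRuling (reflct a D) := IsRuling_reflct hroot hD
  refine ⟨a, hroot, hRul', ruling_d_pos h1 h2 hRul', ?_⟩
  have : (reflct a D) 0 = D 0 + dpB D a * a 0 := rfl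
  rw [this, ha0]
  linarith

lemma exists_unique_one {ι : Type*} [DecidableEq ι] {s : Finset ι} {f : ι → ℤ}
    (h0 : ∀ i ∈ s, 0 ≤ f i) (h1 : ∑ i ∈ s, f i = 1) :
    ∃ i ∈ s, f i = 1 ∧ ∀ t ∈ s, t ≠ i → f t = 0 := by
  have hex : ∃ i ∈ s, f i ≠ 0 := by
    by_contra h
    push_neg at h
    rw [Finset.sum_eq_zero h] at h1
    exact one_ne_zero h1.symm
  obtain ⟨i, hi, hfi⟩ := hex
  have hfi1 : 1 ≤ f i := by
    have := h0 i hi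
    omega
  have hsplit := Finset.sum_erase_add s f hi
  have herase_nn : 0 ≤ ∑ t ∈ s.erase i, f t :=
    Finset.sum_nonneg (fun t ht => h0 t (Finset.mem_of_mem_erase ht))
  have herase0 : ∑ t ∈ s.erase i, f t = 0 := by omega
  have hfi_eq : f i = 1 := by omega
  refine ⟨i, hi, hfi_eq, fun t ht hti => ?_⟩
  have := (Finset.sum_eq_zero_iff_of_nonneg
    (fun t ht => h0 t (Finset.mem_of_mem_erase ht))).mp herase0
  exact this t (Finset.mem_erase.mpr ⟨hti, ht⟩)

lemma ruling_d_one {D : Fin (r+1) → ℤ} (h1 : 4 ≤ r) (h2 : r ≤ 8)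
    (hD : IsRuling D) (hd : D 0 = 1) :
    ∃ j : Fin r, D = l 0 - l j.succ := by
  have hs : ∑ i : Fin r, (- D i.succ) = 1 := by
    have := ruling_sum hD
    rw [Finset.sum_neg_distrib, this, hd]
    ring
  obtain ⟨j, _, hj1, hj0⟩ := exists_unique_one
    (f := fun i : Fin r => - D i.succ) (s := Finset.univ)
    (fun i _ => by simpa using neg_nonneg.mpr (ruling_coord_nonpos h1 h2 hD i)) hs
  refine ⟨j, ?_⟩
  funext t
  induction t using Fin.cases with
  | zero =>
    simp [l, hd, (Fin.succ_ne_zero j).symm]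
  | succ s =>
    by_cases hsj : s = j
    · subst hsj
      have : D s.succ = -1 := by linarith [hj1]
      simp [this, l, Fin.succ_ne_zero]
    · have : D s.succ = 0 := by
        have := hj0 s (Finset.mem_univ s) hsj
        linarith [this]
      have hne : s.succ ≠ j.succ := fun h => hsj (Fin.succ_inj.mp h)
      simp [this, l, Fin.succ_ne_zero, hne]

lemma int_mul_sub_one_nonneg (n : ℤ) : 0 ≤ n * (n - 1) := by
  rcases le_or_gt 1 n with h | h
  · nlinarith
  · have : n ≤ 0 := by omega
    nlinarith

lemma int_mul_add_one_nonneg (n : ℤ) : 0 ≤ n * (n + 1) := by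
  have := int_mul_sub_one_nonneg (-n)
  nlinarith

lemma exc_orth_classify {j : Fin r} {E : Fin (r+1) → ℤ} (h1 : 4 ≤ r) (h2 : r ≤ 8)
    (hE : IsExc E) (horth : dpB (l 0 - l j.succ) E = 0) :
    (∃ i : Fin r, i ≠ j ∧ E = l i.succ) ∨
    (∃ i : Fin r, i ≠ j ∧ E = l 0 - l j.succ - l i.succ) := by
  classical
  have horth' : E 0 + E j.succ = 0 := by
    rw [dpB_sub_left, dpB_l_left, dpB_l_left, if_pos rfl,
      if_neg (Fin.succ_ne_zero j)] at horth
    linarith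
  set t := E 0 with htdef
  have hEj : E j.succ = -t := by linarith
  have hq : ∑ i : Fin r, E i.succ ^ 2 = t * t + 1 := by
    have h := hE.1
    unfold dpB at h
    have hc : ∀ i : Fin r, E i.succ * E i.succ = E i.succ ^ 2 := fun i => (sq _).symm
    rw [Finset.sum_congr rfl (fun i _ => hc i)] at h
    linarith
  have hs : ∑ i : Fin r, E i.succ = 1 - 3 * t := by
    have h := hE.2
    rw [dpB_negK_eq] at h
    linarith
  have hmemj : j ∈ (Finset.univ : Finset (Fin r)) := Finset.mem_univ j
  have hA : ∑ i ∈ Finset.univ.erase j, E i.succ ^ 2 = 1 := by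
    have h3 := Finset.sum_erase_add Finset.univ (fun i : Fin r => E i.succ ^ 2) hmemj
    rw [hEj] at h3
    nlinarith [h3, hq]
  have hB : ∑ i ∈ Finset.univ.erase j, E i.succ = 1 - 2 * t := by
    have h3 := Finset.sum_erase_add Finset.univ (fun i : Fin r => E i.succ) hmemj
    rw [hEj] at h3
    linarith [h3, hs]
  have cs := sq_sum_le_card_mul_sum_sq (s := Finset.univ.erase j)
    (f := fun i : Fin r => E i.succ)
  rw [hA, hB, Finset.card_erase_of_mem hmemj, Finset.card_univ, Fintype.card_fin] at cs
  have hcard : ((r - 1 : ℕ) : ℤ) ≤ 7 := by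
    have : r - 1 ≤ 7 := by omega
    exact_mod_cast this
  have ht01 : t = 0 ∨ t = 1 := by
    have hub : (1 - 2*t)^2 ≤ 7 := by nlinarith [cs, hcard]
    have h0 : 0 ≤ t := by nlinarith
    have h1' : t ≤ 1 := by nlinarith
    omega
  rcases ht01 with ht | ht
  · -- t = 0 : E = l i.succ
    left
    rw [ht] at hEj hq hs
    have hzero : ∑ i : Fin r, E i.succ * (E i.succ - 1) = 0 := by
      have expand : ∀ i : Fin r, E i.succ * (E i.succ - 1) = E i.succ ^ 2 - E i.succ :=
        fun i => by ring
      rw [Finset.sum_congr rfl (fun i _ => expand i), Finset.sum_sub_distrib, hq, hs]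
      ring
    have hall := (Finset.sum_eq_zero_iff_of_nonneg
      (fun i _ => int_mul_sub_one_nonneg (E i.succ))).mp hzero
    have h01 : ∀ i : Fin r, E i.succ = 0 ∨ E i.succ = 1 := by
      intro i
      have := hall i (Finset.mem_univ i)
      rcases mul_eq_zero.mp this with h | h
      · exact Or.inl h
      · exact Or.inr (by linarith)
    have hnn : ∀ i ∈ (Finset.univ : Finset (Fin r)), 0 ≤ E i.succ := by
      intro i _
      rcases h01 i with h | h <;> omega
    have hsum1 : ∑ i : Fin r, E i.succ = 1 := by rw [hs]; ring
    obtain ⟨i, _, hi1, hi0⟩ := exists_unique_one (f := fun i : Fin r => E i.succ)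
      (s := Finset.univ) hnn hsum1
    have hij : i ≠ j := by
      intro h
      rw [h] at hi1
      omega
    refine ⟨i, hij, ?_⟩
    funext w
    induction w using Fin.cases with
    | zero =>
      simp [l, (Fin.succ_ne_zero i).symm]
      exact ht
    | succ s =>
      by_cases hsi : s = i
      · subst hsi
        simp [l, hi1]
      · have := hi0 s (Finset.mem_univ s) hsi
        have hne : s.succ ≠ i.succ := fun h => hsi (Fin.succ_inj.mp h)
        simp [l, this, hne]
  · -- t = 1 : E = l 0 - l j.succ - l i.succ
    right
    rw [ht] at hEj hq hs hB
    have hzero : ∑ i : Fin r, E i.succ * (E i.succ + 1) = 0 := by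
      have expand : ∀ i : Fin r, E i.succ * (E i.succ + 1) = E i.succ ^ 2 + E i.succ :=
        fun i => by ring
      rw [Finset.sum_congr rfl (fun i _ => expand i), Finset.sum_add_distrib, hq, hs]
      ring
    have hall := (Finset.sum_eq_zero_iff_of_nonneg
      (fun i _ => int_mul_add_one_nonneg (E i.succ))).mp hzero
    have h01 : ∀ i : Fin r, E i.succ = 0 ∨ E i.succ = -1 := by
      intro i
      have := hall i (Finset.mem_univ i)
      rcases mul_eq_zero.mp this with h | h
      · exact Or.inl h
      · exact Or.inr (by linarith)
    have hnn : ∀ i ∈ Finset.univ.erase j, 0 ≤ -E i.succ := by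
      intro i _
      rcases h01 i with h | h <;> omega
    have hsum1 : ∑ i ∈ Finset.univ.erase j, -E i.succ = 1 := by
      rw [Finset.sum_neg_distrib, hB]; ring
    obtain ⟨i, himem, hi1, hi0⟩ := exists_unique_one (f := fun i : Fin r => -E i.succ)
      (s := Finset.univ.erase j) hnn hsum1
    have hij : i ≠ j := (Finset.mem_erase.mp himem).1
    have hij' : i.succ ≠ j.succ := fun h => hij (Fin.succ_inj.mp h)
    refine ⟨i, hij, ?_⟩
    funext w
    induction w using Fin.cases with
    | zero =>
      simp [l, (Fin.succ_ne_zero i).symm, (Fin.succ_ne_zero j).symm]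
      exact ht
    | succ s =>
      by_cases hsj : s = j
      · subst hsj
        simp [l, hEj, Fin.succ_ne_zero, hij'.symm]
      · by_cases hsi : s = i
        · subst hsi
          have : E s.succ = -1 := by omega
          simp [l, this, Fin.succ_ne_zero, hij']
        · have := hi0 s (Finset.mem_erase.mpr ⟨hsj, Finset.mem_univ s⟩) hsi
          have hne1 : s.succ ≠ i.succ := fun h => hsi (Fin.succ_inj.mp h)
          have hne2 : s.succ ≠ j.succ := fun h => hsj (Fin.succ_inj.mp h)
          have hE0 : E s.succ = 0 := by omega
          simp [l, hE0, Fin.succ_ne_zero, hne1, hne2]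

lemma decomps_base (h1 : 4 ≤ r) (h2 : r ≤ 8) (j : Fin r) :
    (decomps (l (r := r) 0 - l j.succ)).ncard = r - 1 := by
  classical
  set D : Fin (r+1) → ℤ := l 0 - l j.succ with hDdef
  have hD0 : dpB (l (r:=r) 0) (l (r:=r) 0) = 1 := by
    rw [dpB_l_right, if_pos rfl, l_apply_self]
  have hii : ∀ i : Fin r, dpB (l (r:=r) i.succ) (l (r:=r) i.succ) = -1 := fun i => by
    rw [dpB_l_right, if_neg (Fin.succ_ne_zero i), l_apply_self]
  have h0i : ∀ i : Fin r, dpB (l (r:=r) 0) (l (r:=r) i.succ) = 0 := fun i => by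
    rw [dpB_l_right, if_neg (Fin.succ_ne_zero i), l_apply_ne (Fin.succ_ne_zero i)]
    ring
  have hi0 : ∀ i : Fin r, dpB (l (r:=r) i.succ) (l (r:=r) 0) = 0 := fun i => by
    rw [dpB_comm]; exact h0i i
  have hij2 : ∀ i i' : Fin r, i ≠ i' → dpB (l (r:=r) i.succ) (l (r:=r) i'.succ) = 0 := by
    intro i i' hne
    have : i'.succ ≠ i.succ := fun h => hne (Fin.succ_inj.mp h).symm
    rw [dpB_l_right, if_neg (Fin.succ_ne_zero i'), l_apply_ne this]
    ring
  have hlnegK : ∀ i : Fin r, dpB (l (r:=r) i.succ) negK = 1 := fun i => by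
    rw [dpB_l_negK, if_neg (Fin.succ_ne_zero i)]
  have h0negK : dpB (l (r:=r) 0) negK = 3 := by rw [dpB_l_negK, if_pos rfl]
  have hDD : dpB D D = 0 := by
    rw [hDdef]
    simp only [dpB_sub_left, dpB_sub_right, hD0, hii j, h0i j, hi0 j]
    ring
  have hDnegK : dpB D negK = 2 := by
    rw [hDdef, dpB_sub_left, hlnegK j, h0negK]
    ring
  have hDl : ∀ i : Fin r, i ≠ j → dpB D (l i.succ) = 0 := by
    intro i hne
    rw [hDdef]
    simp only [dpB_sub_left, h0i i, hij2 j i (fun h => hne h.symm)]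
    ring
  have hlD : ∀ i : Fin r, i ≠ j → dpB (l i.succ) D = 0 := by
    intro i hne
    rw [dpB_comm]; exact hDl i hne
  have hExcF : ∀ i : Fin r, i ≠ j → IsExc (D - l i.succ) := by
    intro i hne
    constructor
    · rw [dpB_sub_left, dpB_sub_right D D (l i.succ), dpB_sub_right (l i.succ) D (l i.succ),
        hDD, hDl i hne, hlD i hne, hii i]
      ring
    · rw [dpB_sub_left, hDnegK, hlnegK i]
      ring
  have hmeet : ∀ i : Fin r, i ≠ j → dpB (l i.succ) (D - l i.succ) = 1 := by
    intro i hne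
    rw [dpB_sub_right (l i.succ) D (l i.succ), hlD i hne, hii i]
    ring
  have hDecomp : decomps D =
      (fun i : Fin r => ({l i.succ, D - l i.succ} : Set (Fin (r+1) → ℤ))) ''
        {i : Fin r | i ≠ j} := by
    ext s
    constructor
    · rintro ⟨E, F, hE, hF, hEF, hsum, rfl⟩
      have horthE : dpB D E = 0 := by
        rw [← hsum, dpB_add_left, hE.1, dpB_comm F E] at *
        linarith [hEF, hE.1]
      have horthE' : dpB (l (r:=r) 0 - l j.succ) E = 0 := horthE
      have hF_eq : F = D - E := by rw [← hsum]; abel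
      rcases exc_orth_classify h1 h2 hE horthE' with ⟨i, hne, hEeq⟩ | ⟨i, hne, hEeq⟩
      · exact ⟨i, hne, by rw [hF_eq, hEeq]⟩
      · refine ⟨i, hne, ?_⟩
        have hEeq' : E = D - l i.succ := by rw [hEeq, hDdef]
        have hFeq : F = l i.succ := by rw [hF_eq, hEeq']; abel
        simp only [hFeq, hEeq']
        rw [Set.pair_comm]
    · rintro ⟨i, hne, rfl⟩
      exact ⟨l i.succ, D - l i.succ, isExc_l i, hExcF i hne, hmeet i hne, by abel, rfl⟩
  rw [hDecomp]
  have hinj : Set.InjOn (fun i : Fin r => ({l i.succ, D - l i.succ} : Set (Fin (r+1) → ℤ)))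
      {i : Fin r | i ≠ j} := by
    intro a _ b _ hab
    simp only at hab
    have hD0v : D 0 = 1 := by
      rw [hDdef]
      show l (r:=r) 0 0 - l (r:=r) j.succ 0 = 1
      rw [l_apply_self, l_apply_ne (Fin.succ_ne_zero j).symm]
      ring
    have hmem : (l (r:=r) a.succ) ∈ ({l b.succ, D - l b.succ} : Set (Fin (r+1) → ℤ)) := by
      rw [← hab]; left; rfl
    rcases hmem with h | h
    · by_contra hne
      have : l (r:=r) a.succ a.succ = l (r:=r) b.succ a.succ := by rw [h]
      rw [l_apply_self, l_apply_ne (fun hc => hne (Fin.succ_inj.mp hc))] at this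
      exact one_ne_zero this
    · exfalso
      have h2' := congrFun h 0
      have e1 : l (r:=r) a.succ 0 = 0 := l_apply_ne (Fin.succ_ne_zero a).symm
      have e2 : (D - l b.succ) 0 = 1 := by
        show D 0 - l (r:=r) b.succ 0 = 1
        rw [hD0v, l_apply_ne (Fin.succ_ne_zero b).symm]
        ring
      rw [e1, e2] at h2'
      norm_num at h2'
  rw [Set.ncard_image_of_injOn hinj]
  have hset : {i : Fin r | i ≠ j} = ↑((Finset.univ : Finset (Fin r)).erase j) := by
    ext x; simp
  rw [hset, Set.ncard_coe_finset, Finset.card_erase_of_mem (Finset.mem_univ j),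
    Finset.card_univ, Fintype.card_fin]

lemma decomps_card (h1 : 4 ≤ r) (h2 : r ≤ 8) (D : Fin (r+1) → ℤ) (hD : IsRuling D) :
    (decomps D).ncard = r - 1 := by
  have key : ∀ n : ℕ, ∀ D : Fin (r+1) → ℤ, IsRuling D → D 0 ≤ (n : ℤ) + 1 →
      (decomps D).ncard = r - 1 := by
    intro n
    induction n with
    | zero =>
      intro D hD hle
      have hge := ruling_d_pos h1 h2 hD
      have hd1 : D 0 = 1 := by push_cast at hle; omega
      obtain ⟨j, hj⟩ := ruling_d_one h1 h2 hD hd1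
      rw [hj]
      exact decomps_base h1 h2 j
    | succ n ih =>
      intro D hD hle
      by_cases hcase : D 0 ≤ (n : ℤ) + 1
      · exact ih D hD hcase
      · push_neg at hcase
        have hd2 : 2 ≤ D 0 := by
          have := ruling_d_pos h1 h2 hD
          omega
        obtain ⟨a, ha, hrul, hge1, hlt⟩ := descent_step h1 h2 hD hd2
        rw [← decomps_reflct_ncard ha D]
        apply ih _ hrul
        push_cast at hle ⊢
        omega
  have : D 0 ≤ ((D 0).toNat : ℤ) + 1 := by
    rcases le_or_gt 0 (D 0) with h | h
    · rw [Int.toNat_of_nonneg h]; omega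
    · have : ((D 0).toNat : ℤ) = 0 := by omega
      omega
  exact key (D 0).toNat D hD this

/-- Every ruling has exactly `r - 1` unordered decompositions into pairs of
exceptional classes meeting in one point. -/
theorem stmt10 (r : ℕ) (h1 : 4 ≤ r) (h2 : r ≤ 8) (D : Fin (r + 1) → ℤ)
    (hD : IsRuling D) :
    {s : Set (Fin (r + 1) → ℤ) | ∃ E F : Fin (r + 1) → ℤ,
      IsExc E ∧ IsExc F ∧ dpB E F = 1 ∧ E + F = D ∧ s = {E, F}}.ncard = r - 1 :=
  decomps_card h1 h2 D hD
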